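/- The one- and two-index Casimir operators have the explicit expressions C_i = ¼(μ_i² − μ_i r_i − ¾) and C_{ij} = ¼(−L_{ij}² + (μ_i r_i + μ_j r_j)² − 1) as operators on ℝ[x_1,…,x_n], where L_{ij} = x_i T_j − x_j T_i is the Dunkl angular momentum operator and i ≠ j. -/

import Mathlib

open MvPolynomial Finset

noncomputable section

variable {n : ℕ}

/-- Reflection operator `r_i`. -/
def reflOp (i : Fin n) : Module.End ℝ (MvPolynomial (Fin n) ℝ) :=
  (MvPolynomial.aeval (fun j : Fin n => if j = i then -X i else X j)).toLinearMap

/-- Division by the variable `x_i` (as a linear operator, discarding non-divisible terms). -/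
def divXop (i : Fin n) : Module.End ℝ (MvPolynomial (Fin n) ℝ) where
  toFun p := p.divMonomial (Finsupp.single i 1)
  map_add' p q := by ext m; simp [coeff_divMonomial]
  map_smul' c p := by ext m; simp [coeff_divMonomial]

/-- The `i`-th `Z_2^n` Dunkl operator `T_i = ∂_i + μ_i x_i⁻¹ (1 - r_i)`. -/
def dunklT (μ : Fin n → ℝ) (i : Fin n) : Module.End ℝ (MvPolynomial (Fin n) ℝ) :=
  (pderiv i).toLinearMap + μ i • (divXop i * (1 - reflOp i))

/-- The intermediate Laplace–Dunkl operator `Δ_A = Σ_{i∈A} T_i²`. -/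
def lapD (μ : Fin n → ℝ) (A : Finset (Fin n)) : Module.End ℝ (MvPolynomial (Fin n) ℝ) :=
  ∑ i ∈ A, dunklT μ i ^ 2

/-- Multiplication by `‖x_A‖² = Σ_{i∈A} x_i²`. -/
def mulX2 (A : Finset (Fin n)) : Module.End ℝ (MvPolynomial (Fin n) ℝ) :=
  LinearMap.mulLeft ℝ (∑ i ∈ A, X i ^ 2)

/-- The Euler operator `E_A = Σ_{i∈A} x_i ∂_i`. -/
def eulerOp (A : Finset (Fin n)) : Module.End ℝ (MvPolynomial (Fin n) ℝ) :=
  ∑ i ∈ A, LinearMap.mulLeft ℝ (X i) * (pderiv i).toLinearMap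

/-- `γ_A = |A|/2 + Σ_{i∈A} μ_i`. -/
def gamA (μ : Fin n → ℝ) (A : Finset (Fin n)) : ℝ :=
  (A.card : ℝ) / 2 + ∑ i ∈ A, μ i

/-- The Casimir operator `C_A`. -/
def casOp (μ : Fin n → ℝ) (A : Finset (Fin n)) : Module.End ℝ (MvPolynomial (Fin n) ℝ) :=
  (1 / 4 : ℝ) • ((eulerOp A + gamA μ A • 1) ^ 2 - (2 : ℝ) • (eulerOp A + gamA μ A • 1)
    - mulX2 A * lapD μ A)

end

noncomputable section Aux

variable {n : ℕ}

/-- Extensionality for endomorphisms of the polynomial algebra via monomials. -/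
lemma end_ext {f g : Module.End ℝ (MvPolynomial (Fin n) ℝ)}
    (h : ∀ m : Fin n →₀ ℕ, f (monomial m 1) = g (monomial m 1)) : f = g := by
  refine LinearMap.ext fun p => ?_
  induction p using MvPolynomial.induction_on' with
  | monomial u a =>
    have hm : (monomial u a : MvPolynomial (Fin n) ℝ) = a • monomial u 1 := by
      rw [smul_monomial]; norm_num
    rw [hm, map_smul, map_smul, h]
  | add p q hp hq => rw [map_add, map_add, hp, hq]

lemma reflOp_monomial (i : Fin n) (m : Fin n →₀ ℕ) (c : ℝ) :
    reflOp i (monomial m c) = ((-1:ℝ)^(m i)) • monomial m c := by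
  classical
  simp only [reflOp, AlgHom.toLinearMap_apply, aeval_monomial]
  have h1 : (m.prod fun k e => (if k = i then -X i else X k : MvPolynomial (Fin n) ℝ) ^ e)
      = (m.prod fun k e => (if k = i then (-1:MvPolynomial (Fin n) ℝ)^e else 1))
        * m.prod fun k e => (X k : MvPolynomial (Fin n) ℝ) ^ e := by
    rw [← Finsupp.prod_mul]
    refine Finsupp.prod_congr fun k _ => ?_
    split_ifs with h
    · subst h; rw [neg_pow]
    · ring
  have h2 : (m.prod fun k e => (if k = i then (-1:MvPolynomial (Fin n) ℝ)^e else 1))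
      = (-1:MvPolynomial (Fin n) ℝ)^(m i) := by
    rw [Finsupp.prod_ite_eq' m i (fun _ e => (-1:MvPolynomial (Fin n) ℝ)^e)]
    split_ifs with h
    · rfl
    · rw [Finsupp.notMem_support_iff.mp h]; rfl
  rw [h1, h2, monomial_eq, smul_eq_C_mul]
  simp only [algebraMap_eq, map_pow, map_neg, map_one]
  ring

lemma divXop_monomial (i : Fin n) (m : Fin n →₀ ℕ) (c : ℝ) :
    divXop i (monomial m c) =
      if m i = 0 then 0 else monomial (m - Finsupp.single i 1) c := by
  classical
  split_ifs with h
  · show (monomial m c).divMonomial (Finsupp.single i 1) = 0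
    ext d
    rw [coeff_divMonomial, coeff_monomial]
    rw [if_neg, coeff_zero]
    intro he
    have := congrArg (fun f : Fin n →₀ ℕ => f i) he
    simp [h] at this
    omega
  · show (monomial m c).divMonomial (Finsupp.single i 1) = _
    have hm : monomial m c
        = monomial (Finsupp.single i 1) (1:ℝ) * monomial (m - Finsupp.single i 1) c := by
      rw [monomial_mul, one_mul]
      congr 1
      rw [add_tsub_cancel_of_le]
      intro k
      simp only [Finsupp.single_apply]
      split_ifs with hk
      · subst hk; omega
      · simp
    rw [hm, divMonomial_monomial_mul]

/-- coefficient function of the Dunkl operator on monomials -/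
def cf (t : ℝ) (k : ℕ) : ℝ := (k : ℝ) + t * (1 - (-1)^k)

lemma dunklT_monomial (μ : Fin n → ℝ) (i : Fin n) (m : Fin n →₀ ℕ) (c : ℝ) :
    dunklT μ i (monomial m c) =
      cf (μ i) (m i) • monomial (m - Finsupp.single i 1) c := by
  classical
  simp only [dunklT, LinearMap.add_apply, LinearMap.smul_apply, Module.End.mul_apply,
    LinearMap.sub_apply, Module.End.one_apply, Derivation.coeFn_coe, pderiv_monomial,
    reflOp_monomial, map_smul, divXop_monomial, cf]
  rcases Nat.eq_zero_or_pos (m i) with h | h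
  · have : m - Finsupp.single i 1 = m := by
      ext k
      simp only [Finsupp.tsub_apply, Finsupp.single_apply]
      split_ifs with hk
      · subst hk; omega
      · simp
    simp [h, this]
  · have h1 : (monomial m) c - ((-1:ℝ)^(m i)) • (monomial m) c
        = monomial m ((1 - (-1:ℝ)^(m i)) * c) := by
      rw [smul_monomial, ← map_sub]
      congr 1; simp [smul_eq_mul]; ring
    rw [h1, divXop_monomial, if_neg (by omega), smul_monomial, smul_monomial, ← map_add]
    congr 1; simp [smul_eq_mul]; ring

lemma mulX_monomial (i : Fin n) (m : Fin n →₀ ℕ) (c : ℝ) :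
    (LinearMap.mulLeft ℝ (X i)) (monomial m c) = monomial (m + Finsupp.single i 1) c := by
  rw [LinearMap.mulLeft_apply, X, monomial_mul, one_mul, add_comm]

end Aux
noncomputable section Rel

variable {n : ℕ}

@[simp] lemma cf_zero (t : ℝ) : cf t 0 = 0 := by simp [cf]

lemma pd_monomial (i : Fin n) (m : Fin n →₀ ℕ) (c : ℝ) :
    pderiv i (monomial m c)
      = (m i : ℝ) • monomial (m - Finsupp.single i 1) c := by
  rw [pderiv_monomial, smul_monomial]
  congr 1
  simp [smul_eq_mul, mul_comm]

lemma idx_add_sub (i : Fin n) (m : Fin n →₀ ℕ) :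
    m + Finsupp.single i 1 - Finsupp.single i 1 = m := by
  ext k
  rw [Finsupp.tsub_apply, Finsupp.add_apply]
  omega

lemma idx_sub_add {i : Fin n} {m : Fin n →₀ ℕ} (h : m i ≠ 0) :
    m - Finsupp.single i 1 + Finsupp.single i 1 = m := by
  ext k
  rw [Finsupp.add_apply, Finsupp.tsub_apply]
  rcases eq_or_ne k i with rfl | hk
  · rw [Finsupp.single_eq_same]; omega
  · rw [Finsupp.single_eq_of_ne' (Ne.symm hk)]; omega

lemma idx_add_sub_comm {i j : Fin n} (h : i ≠ j) (m : Fin n →₀ ℕ) :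
    m + Finsupp.single j 1 - Finsupp.single i 1
      = m - Finsupp.single i 1 + Finsupp.single j 1 := by
  ext k
  rw [Finsupp.tsub_apply, Finsupp.add_apply, Finsupp.add_apply, Finsupp.tsub_apply]
  rcases eq_or_ne k i with rfl | hk
  · rw [Finsupp.single_eq_of_ne' (Ne.symm h)]; omega
  · rcases eq_or_ne k j with rfl | hk2
    · rw [Finsupp.single_eq_of_ne' (Ne.symm hk)]; omega
    · rw [Finsupp.single_eq_of_ne' (Ne.symm hk), Finsupp.single_eq_of_ne' (Ne.symm hk2)]; omega

lemma idx_sub_sub_comm (i j : Fin n) (m : Fin n →₀ ℕ) :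
    m - Finsupp.single j 1 - Finsupp.single i 1
      = m - Finsupp.single i 1 - Finsupp.single j 1 := by
  rw [tsub_tsub, tsub_tsub, add_comm]

lemma sub_single_eq_self {i : Fin n} {m : Fin n →₀ ℕ} (h : m i = 0) :
    m - Finsupp.single i 1 = m := by
  ext k
  rw [Finsupp.tsub_apply]
  rcases eq_or_ne k i with rfl | hk
  · rw [Finsupp.single_eq_same]; omega
  · rw [Finsupp.single_eq_of_ne' (Ne.symm hk)]; omega

lemma rel_rr_self (i : Fin n) : reflOp (n := n) i * reflOp i = 1 := by
  refine end_ext fun m => ?_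
  simp only [Module.End.mul_apply, Module.End.one_apply, reflOp_monomial, map_smul, smul_smul,
    ← mul_pow]
  norm_num

lemma rel_rx_self (i : Fin n) :
    reflOp (n := n) i * LinearMap.mulLeft ℝ (X i)
      = -(LinearMap.mulLeft ℝ (X i) * reflOp i) := by
  refine end_ext fun m => ?_
  simp only [Module.End.mul_apply, LinearMap.neg_apply, reflOp_monomial, mulX_monomial,
    map_smul, Finsupp.coe_add, Pi.add_apply, Finsupp.single_eq_same, pow_succ]
  module

lemma rel_rT_self (μ : Fin n → ℝ) (i : Fin n) :
    reflOp (n := n) i * dunklT μ i = -(dunklT μ i * reflOp i) := by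
  refine end_ext fun m => ?_
  simp only [Module.End.mul_apply, LinearMap.neg_apply, reflOp_monomial, dunklT_monomial,
    map_smul, smul_smul, Finsupp.coe_tsub, Pi.sub_apply, Finsupp.single_eq_same]
  rcases Nat.eq_zero_or_pos (m i) with h | h
  · simp [h]
  · have hk : m i - 1 + 1 = m i := by omega
    have hs : (-1:ℝ) ^ (m i) = ((-1:ℝ) ^ (m i - 1)) * (-1) := by
      rw [← pow_succ, hk]
    rw [hs]
    module

lemma rel_Tx_self (μ : Fin n → ℝ) (i : Fin n) :
    dunklT μ i * LinearMap.mulLeft ℝ (X i)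
      = LinearMap.mulLeft ℝ (X i) * dunklT μ i + 1 + (2 * μ i) • reflOp i := by
  refine end_ext fun m => ?_
  simp only [Module.End.mul_apply, LinearMap.add_apply, Module.End.one_apply, LinearMap.smul_apply,
    dunklT_monomial, mulX_monomial, reflOp_monomial, map_smul, smul_smul,
    Finsupp.coe_add, Pi.add_apply, Finsupp.single_eq_same, idx_add_sub]
  rcases Nat.eq_zero_or_pos (m i) with h | h
  · rw [sub_single_eq_self h, h]
    simp only [cf, Nat.cast_zero, Nat.cast_add, Nat.cast_one, pow_succ, pow_zero, zero_add]
    module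
  · rw [idx_sub_add (by omega)]
    simp only [cf, Nat.cast_add, Nat.cast_one, pow_succ]
    module

lemma rel_euler_self (μ : Fin n → ℝ) (i : Fin n) :
    LinearMap.mulLeft ℝ (X i) * dunklT μ i
      = LinearMap.mulLeft ℝ (X i) * (pderiv i).toLinearMap + μ i • (1 - reflOp i) := by
  refine end_ext fun m => ?_
  simp only [Module.End.mul_apply, LinearMap.add_apply, LinearMap.smul_apply, LinearMap.sub_apply,
    Module.End.one_apply, dunklT_monomial, mulX_monomial, reflOp_monomial, Derivation.coeFn_coe, pd_monomial,
    map_smul, smul_smul]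
  rcases Nat.eq_zero_or_pos (m i) with h | h
  · rw [sub_single_eq_self h, h]
    simp only [cf, Nat.cast_zero, pow_zero]
    module
  · rw [idx_sub_add (by omega)]
    simp only [cf]
    module

variable {n : ℕ}

lemma rel_xx (i j : Fin n) :
    LinearMap.mulLeft ℝ (X j) * LinearMap.mulLeft ℝ (X i)
      = LinearMap.mulLeft ℝ (X i) * (LinearMap.mulLeft ℝ (X j)
          : Module.End ℝ (MvPolynomial (Fin n) ℝ)) := by
  refine end_ext fun m => ?_
  simp only [Module.End.mul_apply, mulX_monomial, add_right_comm]

lemma rel_rx_ne {i j : Fin n} (h : i ≠ j) :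
    reflOp (n := n) i * LinearMap.mulLeft ℝ (X j)
      = LinearMap.mulLeft ℝ (X j) * reflOp i := by
  refine end_ext fun m => ?_
  simp only [Module.End.mul_apply, reflOp_monomial, mulX_monomial, map_smul,
    Finsupp.coe_add, Pi.add_apply, Finsupp.single_apply, if_neg (Ne.symm h), add_zero]

lemma rel_rr_ne (i j : Fin n) :
    reflOp (n := n) i * reflOp j = reflOp j * reflOp i := by
  refine end_ext fun m => ?_
  simp only [Module.End.mul_apply, reflOp_monomial, map_smul, smul_smul, mul_comm]

lemma rel_Tx_ne {i j : Fin n} (μ : Fin n → ℝ) (h : i ≠ j) :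
    dunklT μ i * LinearMap.mulLeft ℝ (X j)
      = LinearMap.mulLeft ℝ (X j) * dunklT μ i := by
  refine end_ext fun m => ?_
  simp only [Module.End.mul_apply, dunklT_monomial, mulX_monomial, map_smul,
    Finsupp.coe_add, Pi.add_apply, Finsupp.single_apply, if_neg (Ne.symm h), add_zero,
    idx_add_sub_comm h]

lemma rel_Tr_ne {i j : Fin n} (μ : Fin n → ℝ) (h : i ≠ j) :
    dunklT μ i * reflOp j = reflOp j * dunklT μ i := by
  refine end_ext fun m => ?_
  simp only [Module.End.mul_apply, dunklT_monomial, reflOp_monomial, map_smul, smul_smul,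
    Finsupp.coe_tsub, Pi.sub_apply, Finsupp.single_apply, if_neg (Ne.symm (Ne.symm h)),
    if_neg (Ne.symm h), tsub_zero, mul_comm]

lemma rel_TT_ne {i j : Fin n} (μ : Fin n → ℝ) (h : i ≠ j) :
    dunklT μ i * dunklT μ j = dunklT μ j * dunklT μ i := by
  refine end_ext fun m => ?_
  simp only [Module.End.mul_apply, dunklT_monomial, map_smul, smul_smul,
    Finsupp.coe_tsub, Pi.sub_apply, Finsupp.single_apply, if_neg (Ne.symm h),
    if_neg (Ne.symm (Ne.symm h)), tsub_zero, idx_sub_sub_comm, mul_comm]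

section Key

variable {A : Type*} [Ring A] [Algebra ℝ A]

lemma key1 (x t r : A) (μ : ℝ)
    (hr2 : r * r = 1) (hrt : r * t = -(t * r)) (hrx : r * x = -(x * r))
    (htx : t * x = x * t + 1 + (2 * μ) • r) :
    (x * t + (1/2 : ℝ) • 1 + μ • r) ^ 2
        - (2 : ℝ) • (x * t + (1/2 : ℝ) • 1 + μ • r) - x * x * (t * t)
      = (μ ^ 2 - 3/4 : ℝ) • 1 - μ • r := by
  have Htx : ∀ z : A, t * (x * z) = x * (t * z) + z + (2 * μ) • (r * z) := fun z => by
    rw [← mul_assoc, htx, add_mul, add_mul, one_mul, smul_mul_assoc, mul_assoc]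
  have Hrt : ∀ z : A, r * (t * z) = -(t * (r * z)) := fun z => by
    rw [← mul_assoc, hrt, neg_mul, mul_assoc]
  have Hrx : ∀ z : A, r * (x * z) = -(x * (r * z)) := fun z => by
    rw [← mul_assoc, hrx, neg_mul, mul_assoc]
  have Hr2 : ∀ z : A, r * (r * z) = z := fun z => by
    rw [← mul_assoc, hr2, one_mul]
  simp only [pow_two, mul_add, add_mul, mul_sub, sub_mul, neg_mul, mul_neg,
    smul_mul_assoc, mul_smul_comm, smul_neg, neg_neg, mul_one, one_mul, smul_smul,
    mul_assoc, htx, Htx, hrt, Hrt, hrx, Hrx, hr2, Hr2]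
  module

end Key

section Key2

variable {A : Type*} [Ring A] [Algebra ℝ A]

lemma key2 (x y t u r s : A) (μ ν : ℝ)
    (hr2 : r * r = 1) (hrt : r * t = -(t * r)) (hrx : r * x = -(x * r))
    (htx : t * x = x * t + 1 + (2 * μ) • r)
    (hs2 : s * s = 1) (hsu : s * u = -(u * s)) (hsy : s * y = -(y * s))
    (huy : u * y = y * u + 1 + (2 * ν) • s)
    (hyx : y * x = x * y) (hty : t * y = y * t) (hux : u * x = x * u)
    (hut : u * t = t * u) (hry : r * y = y * r) (hru : r * u = u * r)
    (hsx : s * x = x * s) (hst : s * t = t * s) (hsr : s * r = r * s) :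
    ((x * t + (1/2 : ℝ) • 1 + μ • r) + (y * u + (1/2 : ℝ) • 1 + ν • s)) ^ 2
        - (2 : ℝ) • ((x * t + (1/2 : ℝ) • 1 + μ • r) + (y * u + (1/2 : ℝ) • 1 + ν • s))
        - (x * x + y * y) * (t * t + u * u)
      = -((x * u - y * t) ^ 2) + (μ • r + ν • s) ^ 2 - 1 := by
  have P : ∀ {a b : A}, a * b = b * a → ∀ z : A, a * (b * z) = b * (a * z) := by
    intro a b h z
    rw [← mul_assoc, h, mul_assoc]
  have N : ∀ {a b : A}, a * b = -(b * a) → ∀ z : A, a * (b * z) = -(b * (a * z)) := by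
    intro a b h z
    rw [← mul_assoc, h, neg_mul, mul_assoc]
  have Htx : ∀ z : A, t * (x * z) = x * (t * z) + z + (2 * μ) • (r * z) := fun z => by
    rw [← mul_assoc, htx, add_mul, add_mul, one_mul, smul_mul_assoc, mul_assoc]
  have Huy : ∀ z : A, u * (y * z) = y * (u * z) + z + (2 * ν) • (s * z) := fun z => by
    rw [← mul_assoc, huy, add_mul, add_mul, one_mul, smul_mul_assoc, mul_assoc]
  have Hr2 : ∀ z : A, r * (r * z) = z := fun z => by rw [← mul_assoc, hr2, one_mul]
  have Hs2 : ∀ z : A, s * (s * z) = z := fun z => by rw [← mul_assoc, hs2, one_mul]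
  have Hrt := N hrt; have Hrx := N hrx; have Hsu := N hsu; have Hsy := N hsy
  have Hyx := P hyx; have Hty := P hty; have Hux := P hux; have Hut := P hut
  have Hry := P hry; have Hru := P hru; have Hsx := P hsx; have Hst := P hst
  have Hsr := P hsr
  simp only [pow_two, mul_add, add_mul, mul_sub, sub_mul, neg_mul, mul_neg,
    smul_mul_assoc, mul_smul_comm, smul_neg, neg_neg, mul_one, one_mul, smul_smul,
    mul_assoc, htx, Htx, huy, Huy, hrt, Hrt, hrx, Hrx, hsu, Hsu, hsy, Hsy,
    hr2, Hr2, hs2, Hs2, hyx, Hyx, hty, Hty, hux, Hux, hut, Hut,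
    hry, Hry, hru, Hru, hsx, Hsx, hst, Hst, hsr, Hsr]
  module

end Key2

noncomputable section MainAux

variable {n : ℕ}

lemma mulLeft_add' (a b : MvPolynomial (Fin n) ℝ) :
    LinearMap.mulLeft ℝ (a + b)
      = LinearMap.mulLeft ℝ a + LinearMap.mulLeft ℝ b := by
  ext p
  simp [add_mul]

lemma mulLeft_sq (a : MvPolynomial (Fin n) ℝ) :
    LinearMap.mulLeft ℝ (a ^ 2)
      = LinearMap.mulLeft ℝ a * LinearMap.mulLeft ℝ a := by
  rw [pow_two, LinearMap.mulLeft_mul, Module.End.mul_eq_comp]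

lemma euler_single (μ : Fin n → ℝ) (i : Fin n) :
    eulerOp {i} + gamA μ {i} • (1 : Module.End ℝ (MvPolynomial (Fin n) ℝ))
      = LinearMap.mulLeft ℝ (X i) * dunklT μ i + (1/2 : ℝ) • 1 + μ i • reflOp i := by
  rw [eulerOp, Finset.sum_singleton, gamA, Finset.sum_singleton, Finset.card_singleton,
    rel_euler_self]
  push_cast
  module

lemma euler_pair (μ : Fin n → ℝ) {i j : Fin n} (hij : i ≠ j) :
    eulerOp {i, j} + gamA μ {i, j} • (1 : Module.End ℝ (MvPolynomial (Fin n) ℝ))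
      = (LinearMap.mulLeft ℝ (X i) * dunklT μ i + (1/2 : ℝ) • 1 + μ i • reflOp i)
        + (LinearMap.mulLeft ℝ (X j) * dunklT μ j + (1/2 : ℝ) • 1 + μ j • reflOp j) := by
  rw [eulerOp, Finset.sum_pair hij, gamA, Finset.sum_pair hij, Finset.card_pair hij,
    rel_euler_self, rel_euler_self]
  push_cast
  module

end MainAux

/-- explicit expressions for the one- and two-index Casimir operators,
with `L_{ij} = x_i T_j − x_j T_i` the Dunkl angular momentum operator. -/
theorem casOp_explicit {n : ℕ} (hn : 1 ≤ n) (μ : Fin n → ℝ) (hμ : ∀ i, 0 < μ i)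
    (i j : Fin n) (hij : i ≠ j) :
    let L : Module.End ℝ (MvPolynomial (Fin n) ℝ) :=
      LinearMap.mulLeft ℝ (X i) * dunklT μ j - LinearMap.mulLeft ℝ (X j) * dunklT μ i
    casOp μ {i} = (1 / 4 : ℝ) •
        ((μ i ^ 2 - 3 / 4) • (1 : Module.End ℝ (MvPolynomial (Fin n) ℝ)) - μ i • reflOp i) ∧
      casOp μ {i, j} = (1 / 4 : ℝ) •
        (-(L ^ 2) + (μ i • reflOp i + μ j • reflOp j) ^ 2 - 1) := by
  intro L
  constructor
  · rw [casOp, euler_single, mulX2, Finset.sum_singleton, mulLeft_sq, lapD,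
      Finset.sum_singleton, pow_two (dunklT μ i)]
    rw [key1 (LinearMap.mulLeft ℝ (X i)) (dunklT μ i) (reflOp i) (μ i)
      (rel_rr_self i) (rel_rT_self μ i) (rel_rx_self i) (rel_Tx_self μ i)]
  · rw [casOp, euler_pair μ hij, mulX2, Finset.sum_pair hij, mulLeft_add',
      mulLeft_sq, mulLeft_sq, lapD, Finset.sum_pair hij,
      pow_two (dunklT μ i), pow_two (dunklT μ j)]
    rw [key2 (LinearMap.mulLeft ℝ (X i)) (LinearMap.mulLeft ℝ (X j))
      (dunklT μ i) (dunklT μ j) (reflOp i) (reflOp j) (μ i) (μ j)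
      (rel_rr_self i) (rel_rT_self μ i) (rel_rx_self i) (rel_Tx_self μ i)
      (rel_rr_self j) (rel_rT_self μ j) (rel_rx_self j) (rel_Tx_self μ j)
      (rel_xx i j) (rel_Tx_ne μ hij) (rel_Tx_ne μ hij.symm) (rel_TT_ne μ hij.symm)
      (rel_rx_ne hij) ((rel_Tr_ne μ hij.symm).symm) (rel_rx_ne hij.symm)
      ((rel_Tr_ne μ hij).symm) (rel_rr_ne j i)]
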